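/- Let ε > 0 and let u be a classical solution of the ε-regularized flow on [0,T]. Then for every t ∈ [0,T], ∫_Ω u(t,x)² dx = ∫_Ω u(0,x)² dx − 2ε ∫_0^t μ_ε[u(s,·)] ds. -/

import Mathlib

open MeasureTheory Set Filter

noncomputable section

/-- The domain: open ball of radius `R` in `ℝ^d`. -/
def Om (d : ℕ) (R : ℝ) : Set (EuclideanSpace ℝ (Fin d)) := Metric.ball 0 R

/-- Laplacian as the sum of second directional derivatives along the standard basis. -/
def lapl {d : ℕ} (w : EuclideanSpace ℝ (Fin d) → ℝ) (x : EuclideanSpace ℝ (Fin d)) : ℝ :=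
  ∑ i : Fin d, fderiv ℝ (fun y => fderiv ℝ w y (EuclideanSpace.single i 1)) x
    (EuclideanSpace.single i 1)

/-- The nonlocal coefficient `μ[w]` over a region `Ω`. -/
def muF {d : ℕ} (Ω : Set (EuclideanSpace ℝ (Fin d))) (σ ω : ℝ)
    (w : EuclideanSpace ℝ (Fin d) → ℝ) : ℝ :=
  ((∫ x in Ω, ‖fderiv ℝ w x‖ ^ 2) + ω * ∫ x in Ω, (w x) ^ 2) /
    ∫ x in Ω, |w x| ^ (2 * σ + 2)

/-- The functional `F[w]` over a region `Ω`. -/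
def FF {d : ℕ} (Ω : Set (EuclideanSpace ℝ (Fin d))) (σ ω : ℝ)
    (w : EuclideanSpace ℝ (Fin d) → ℝ) : ℝ :=
  ((∫ x in Ω, ‖fderiv ℝ w x‖ ^ 2) + ω * ∫ x in Ω, (w x) ^ 2) /
    (∫ x in Ω, |w x| ^ (2 * σ + 2)) ^ (1 / (σ + 1))

/-- A classical solution of the constrained flow on the time interval `I`,
on the ball of radius `R`: smooth on an open neighbourhood of `I × closure Ω`,
vanishing on the lateral boundary, with positive `L^{2σ+2}` integral, satisfying
`∂ₜ u = Δu - ω u + μ[u] |u|^{2σ} u` on `Ω`. -/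
structure IsClassicalSolution (d : ℕ) (R σ ω : ℝ) (I : Set ℝ)
    (u : ℝ → EuclideanSpace ℝ (Fin d) → ℝ) : Prop where
  smooth : ∃ U : Set (ℝ × EuclideanSpace ℝ (Fin d)), IsOpen U ∧
      I ×ˢ closure (Om d R) ⊆ U ∧ ContDiffOn ℝ (⊤ : ℕ∞) (fun p => u p.1 p.2) U
  boundary : ∀ t ∈ I, ∀ x : EuclideanSpace ℝ (Fin d), ‖x‖ = R → u t x = 0
  posint : ∀ t ∈ I, 0 < ∫ x in Om d R, |u t x| ^ (2 * σ + 2)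
  flow : ∀ t ∈ I, ∀ x ∈ Om d R,
      deriv (fun s => u s x) t =
        lapl (u t) x - ω * u t x + muF (Om d R) σ ω (u t) * |u t x| ^ (2 * σ) * u t x

/-- The regularized nonlocal coefficient `μ_ε[w]`. -/
def muEps {d : ℕ} (Ω : Set (EuclideanSpace ℝ (Fin d))) (σ ω ε : ℝ)
    (w : EuclideanSpace ℝ (Fin d) → ℝ) : ℝ :=
  ((∫ x in Ω, ‖fderiv ℝ w x‖ ^ 2) + ω * ∫ x in Ω, (w x) ^ 2) /
    ((∫ x in Ω, |w x| ^ (2 * σ + 2)) + ε)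

/-- A classical solution of the ε-regularized flow on `[0,T]`. -/
structure IsEpsSolution (d : ℕ) (R σ ω ε T : ℝ)
    (u : ℝ → EuclideanSpace ℝ (Fin d) → ℝ) : Prop where
  smooth : ∃ U : Set (ℝ × EuclideanSpace ℝ (Fin d)), IsOpen U ∧
      (Set.Icc 0 T) ×ˢ closure (Om d R) ⊆ U ∧
      ContDiffOn ℝ (⊤ : ℕ∞) (fun p => u p.1 p.2) U
  boundary : ∀ t ∈ Set.Icc 0 T, ∀ x : EuclideanSpace ℝ (Fin d), ‖x‖ = R → u t x = 0
  flow : ∀ t ∈ Set.Icc 0 T, ∀ x ∈ Om d R,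
      deriv (fun s => u s x) t =
        lapl (u t) x - ω * u t x + muEps (Om d R) σ ω ε (u t) * |u t x| ^ (2 * σ) * u t x


-- ===== auxiliary lemmas =====

open RealInnerProductSpace in
lemma norm_dual_sq {d : ℕ} (L : EuclideanSpace ℝ (Fin d) →L[ℝ] ℝ) :
    ‖L‖ ^ 2 = ∑ i : Fin d, (L (EuclideanSpace.single i 1)) ^ 2 := by
  set v := (InnerProductSpace.toDual ℝ (EuclideanSpace ℝ (Fin d))).symm L with hv
  have hLv : ∀ w, L w = ⟪v, w⟫ := fun w => (InnerProductSpace.toDual_symm_apply).symm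
  have hnorm : ‖L‖ = ‖v‖ :=
    ((InnerProductSpace.toDual ℝ (EuclideanSpace ℝ (Fin d))).symm.norm_map L).symm
  rw [hnorm]
  have h1 : ‖v‖ ^ 2 = ∑ i : Fin d, ‖v i‖ ^ 2 := by
    rw [EuclideanSpace.norm_eq, Real.sq_sqrt]
    positivity
  rw [h1]
  refine Finset.sum_congr rfl fun i _ => ?_
  rw [hLv]
  have h2 : ⟪v, EuclideanSpace.single i 1⟫ = v i := by
    rw [real_inner_comm, EuclideanSpace.inner_single_left]
    simp
  rw [h2, Real.norm_eq_abs, sq_abs]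

def uniqNe {d : ℕ} (i : Fin d) : Unique {j : Fin d // ¬ j ≠ i} where
  default := ⟨i, by simp⟩
  uniq := fun j => Subtype.ext (by simpa using j.2)

lemma integral_pi_unique {ι : Type*} [F : Fintype ι] (u : Unique ι) (k : (ι → ℝ) → ℝ) :
    ∫ c : ι → ℝ, k c = ∫ s : ℝ, k (fun _ => s) := by
  have hF : F = (@Unique.fintype _ u) := Subsingleton.elim _ _
  subst hF
  have hmp := (MeasureTheory.volume_preserving_funUnique ι ℝ).symm (MeasurableEquiv.funUnique ι ℝ)
  exact (hmp.integral_comp (MeasurableEquiv.funUnique ι ℝ).symm.measurableEmbedding k).symm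

lemma sum_sq_split {d : ℕ} (i : Fin d) (z : EuclideanSpace ℝ (Fin d)) :
    ∑ j : Fin d, (z j) ^ 2 = (z i) ^ 2 + ∑ j : {j : Fin d // j ≠ i}, (z j.1) ^ 2 := by
  rw [← Fintype.sum_subtype_add_sum_subtype (fun j : Fin d => j ≠ i) (fun j => (z j) ^ 2),
    add_comm]
  congr 1
  letI := uniqNe i
  rw [Fintype.sum_unique]; rfl

lemma norm_sq_sum {d : ℕ} (z : EuclideanSpace ℝ (Fin d)) :
    ‖z‖ ^ 2 = ∑ j : Fin d, (z j) ^ 2 := by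
  rw [EuclideanSpace.norm_eq, Real.sq_sqrt (by positivity)]
  simp [sq_abs]

set_option maxHeartbeats 1000000 in
lemma slice_zero {d : ℕ} {R : ℝ} (hR : 0 < R) (i : Fin d)
    (g G : EuclideanSpace ℝ (Fin d) → ℝ)
    (hInt : Integrable ((Om d R).indicator G))
    (hGc : ContinuousOn G (Metric.closedBall 0 R))
    (hzero : ∀ x : EuclideanSpace ℝ (Fin d), ‖x‖ = R → g x = 0)
    (hderiv : ∀ z : EuclideanSpace ℝ (Fin d), z i = 0 → ∀ s : ℝ,
      ‖z + s • EuclideanSpace.single i 1‖ ≤ R →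
      HasDerivAt (fun s' : ℝ => g (z + s' • EuclideanSpace.single i 1))
        (G (z + s • EuclideanSpace.single i 1)) s) :
    ∫ x in Om d R, G x = 0 := by
  classical
  set e := (MeasurableEquiv.toLp 2 (Fin d → ℝ)).symm with he
  set p : Fin d → Prop := fun j => j ≠ i with hp
  set φ := MeasurableEquiv.piEquivPiSubtypeProd (fun _ : Fin d => ℝ) p with hφ
  have hφmp : MeasurePreserving φ volume
      ((volume : Measure ({j // p j} → ℝ)).prod (volume : Measure ({j // ¬ p j} → ℝ))) := by
    have := measurePreserving_piEquivPiSubtypeProd (fun _ : Fin d => (volume : Measure ℝ)) p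
    exact this
  have hemp : MeasurePreserving (⇑e) volume volume :=
    EuclideanSpace.volume_preserving_symm_measurableEquiv_toLp (Fin d)
  have hOm : MeasurableSet (Om d R) := measurableSet_ball
  set h : (Fin d → ℝ) → ℝ := fun y => (Om d R).indicator G (e.symm y) with hh
  have hInth : Integrable h := by
    exact (hemp.symm e).integrable_comp_emb e.symm.measurableEmbedding |>.mpr hInt
  have step1 : ∫ x in Om d R, G x = ∫ y : Fin d → ℝ, h y := by
    rw [← integral_indicator hOm]
    exact ((hemp.symm e).integral_comp e.symm.measurableEmbedding _).symm
  -- step 2: transfer to product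
  have hInt2 : Integrable (fun z : ({j // p j} → ℝ) × ({j // ¬ p j} → ℝ) => h (φ.symm z)) := by
    exact (hφmp.symm φ).integrable_comp_emb φ.symm.measurableEmbedding |>.mpr hInth
  have step2 : ∫ y : Fin d → ℝ, h y
      = ∫ z : ({j // p j} → ℝ) × ({j // ¬ p j} → ℝ), h (φ.symm z) := by
    exact ((hφmp.symm φ).integral_comp φ.symm.measurableEmbedding _).symm
  have step3 : ∫ z : ({j // p j} → ℝ) × ({j // ¬ p j} → ℝ), h (φ.symm z)
      = ∫ y : {j // p j} → ℝ, ∫ c : {j // ¬ p j} → ℝ, h (φ.symm (y, c)) := by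
    exact integral_prod _ hInt2
  -- step 4: innermost over ℝ
  have step4 : ∀ y : {j // p j} → ℝ,
      ∫ c : {j // ¬ p j} → ℝ, h (φ.symm (y, c))
      = ∫ s : ℝ, h (φ.symm (y, fun _ => s)) :=
    fun y => integral_pi_unique (uniqNe i) (fun c => h (φ.symm (y, c)))
  -- step 5: each slice integral vanishes
  have step5 : ∀ y : {j // p j} → ℝ, (∫ s : ℝ, h (φ.symm (y, fun _ => s))) = 0 := by
    intro y
    set X : ℝ → EuclideanSpace ℝ (Fin d) := fun s => e.symm (φ.symm (y, fun _ => s)) with hX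
    have hXcoord : ∀ (s : ℝ) (j : Fin d), X s j = if hj : p j then y ⟨j, hj⟩ else s := by
      intro s j; rfl
    have hzi : X 0 i = 0 := by
      rw [hXcoord]; simp [hp]
    have hXline : ∀ s : ℝ, X s = X 0 + s • EuclideanSpace.single i 1 := by
      intro s
      ext j
      simp only [PiLp.add_apply, PiLp.smul_apply, EuclideanSpace.single_apply, smul_eq_mul]
      rw [hXcoord, hXcoord]
      by_cases hj : p j
      · have hji : ¬ j = i := hj
        rw [dif_pos hj, dif_pos hj, if_neg hji, mul_zero, add_zero]
      · have hji : j = i := not_not.mp hj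
        rw [dif_neg hj, dif_neg hj, if_pos hji, mul_one, zero_add]
    set S : ℝ := ∑ j : {j // p j}, (y j) ^ 2 with hS
    have hSnn : 0 ≤ S := Finset.sum_nonneg fun j _ => sq_nonneg _
    have hXnormsq : ∀ s : ℝ, ‖X s‖ ^ 2 = s ^ 2 + S := by
      intro s
      rw [norm_sq_sum, sum_sq_split i]
      congr 1
      · rw [hXcoord]; simp [hp]
      · refine Finset.sum_congr rfl fun j _ => ?_
        rw [hXcoord, dif_pos j.2]
    have hmem : ∀ s : ℝ, (X s ∈ Om d R) ↔ s ^ 2 < R ^ 2 - S := by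
      intro s
      rw [Om, Metric.mem_ball, dist_zero_right,
        ← pow_lt_pow_iff_left₀ (norm_nonneg (X s)) hR.le two_ne_zero, hXnormsq]
      constructor <;> intro <;> linarith
    have hind : ∀ s : ℝ, h (φ.symm (y, fun _ => s))
        = Set.indicator {s : ℝ | s ^ 2 < R ^ 2 - S} (fun s => G (X s)) s := by
      intro s
      rw [hh]
      simp only [Set.indicator_apply, Set.mem_setOf_eq]
      exact if_congr (hmem s) rfl rfl
    rw [show (fun s : ℝ => h (φ.symm (y, fun _ => s)))
        = Set.indicator {s : ℝ | s ^ 2 < R ^ 2 - S} (fun s => G (X s)) from funext hind]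
    rcases le_or_gt (R ^ 2 - S) 0 with hc | hc
    · have hempty : Set.indicator {s : ℝ | s ^ 2 < R ^ 2 - S} (fun s => G (X s))
          = fun _ => (0:ℝ) := by
        funext s
        apply Set.indicator_of_notMem
        simp only [Set.mem_setOf_eq, not_lt]
        nlinarith [sq_nonneg s]
      rw [hempty]
      exact integral_zero _ _
    · set c := Real.sqrt (R ^ 2 - S) with hcdef
      have hcpos : 0 < c := Real.sqrt_pos.mpr hc
      have hcsq : c ^ 2 = R ^ 2 - S := Real.sq_sqrt hc.le
      have hset : {s : ℝ | s ^ 2 < R ^ 2 - S} = Set.Ioo (-c) c := by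
        ext s
        simp only [Set.mem_setOf_eq, Set.mem_Ioo, ← abs_lt, ← Real.sqrt_sq_eq_abs]
        rw [hcdef, Real.sqrt_lt_sqrt_iff (sq_nonneg s)]
      rw [hset, integral_indicator measurableSet_Ioo, ← MeasureTheory.integral_Ioc_eq_integral_Ioo,
        ← intervalIntegral.integral_of_le (by linarith : -c ≤ c)]
      have hnorm : ∀ s ∈ Set.uIcc (-c) c, ‖X s‖ ≤ R := by
        intro s hs
        rw [Set.uIcc_of_le (by linarith : -c ≤ c), Set.mem_Icc] at hs
        have h1 : s ^ 2 ≤ c ^ 2 := sq_le_sq' hs.1 hs.2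
        have h3 : ‖X s‖ ^ 2 ≤ R ^ 2 := by rw [hXnormsq]; nlinarith
        nlinarith [norm_nonneg (X s)]
      have hd : ∀ s ∈ Set.uIcc (-c) c, HasDerivAt (fun s' => g (X s')) (G (X s)) s := by
        intro s hs
        have hle : ‖X 0 + s • EuclideanSpace.single i 1‖ ≤ R := by
          rw [← hXline s]; exact hnorm s hs
        have hder := hderiv (X 0) hzi s hle
        have heq : (fun s' : ℝ => g (X 0 + s' • EuclideanSpace.single i 1))
            = fun s' => g (X s') := by
          funext s'; rw [← hXline s']
        rw [heq, ← hXline s] at hder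
        exact hder
      have hXcont : Continuous X := by
        have hXf : X = fun s => X 0 + s • EuclideanSpace.single i 1 := funext hXline
        rw [hXf]
        have h1 : Continuous fun s : ℝ => s • (EuclideanSpace.single i (1:ℝ)) :=
          (continuous_id : Continuous fun s : ℝ => s).smul continuous_const
        exact continuous_const.add h1
      have hci : IntervalIntegrable (fun s => G (X s)) volume (-c) c := by
        apply ContinuousOn.intervalIntegrable
        apply hGc.comp hXcont.continuousOn
        intro s hs
        exact Metric.mem_closedBall.mpr (by rw [dist_zero_right]; exact hnorm s hs)
      rw [intervalIntegral.integral_eq_sub_of_hasDerivAt hd hci]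
      have hbr : ∀ s : ℝ, s ^ 2 = c ^ 2 → ‖X s‖ = R := by
        intro s hs
        have h2 : ‖X s‖ ^ 2 = R ^ 2 := by rw [hXnormsq]; rw [hs, hcsq]; ring
        rw [← Real.sqrt_sq (norm_nonneg (X s)), h2, Real.sqrt_sq hR.le]
      rw [hzero _ (hbr c rfl), hzero _ (hbr (-c) (by ring)), sub_zero]
  rw [step1, step2, step3]
  rw [show (fun y : {j // p j} → ℝ => ∫ c : {j // ¬ p j} → ℝ, h (φ.symm (y, c)))
      = fun _ => (0:ℝ) from funext (fun y => (step4 y).trans (step5 y))]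
  exact integral_zero _ _

set_option maxHeartbeats 1000000 in
lemma ibp {d : ℕ} {R : ℝ} (hR : 0 < R) (w : EuclideanSpace ℝ (Fin d) → ℝ)
    (V : Set (EuclideanSpace ℝ (Fin d))) (hV : IsOpen V)
    (hVc : Metric.closedBall 0 R ⊆ V)
    (hw : ContDiffOn ℝ (⊤ : ℕ∞) w V)
    (hb : ∀ x : EuclideanSpace ℝ (Fin d), ‖x‖ = R → w x = 0) :
    ∫ x in Om d R, w x * lapl w x = - ∫ x in Om d R, ‖fderiv ℝ w x‖ ^ 2 := by
  classical
  set pf : Fin d → EuclideanSpace ℝ (Fin d) → ℝ :=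
    fun i x => fderiv ℝ w x (EuclideanSpace.single i 1) with hpf
  set qf : Fin d → EuclideanSpace ℝ (Fin d) → ℝ :=
    fun i x => fderiv ℝ (fun y => fderiv ℝ w y (EuclideanSpace.single i 1)) x
      (EuclideanSpace.single i 1) with hqf
  -- continuity facts
  have hwc : ContinuousOn w V := hw.continuousOn
  have hfdC : ContDiffOn ℝ (⊤ : ℕ∞) (fderiv ℝ w) V :=
    hw.fderiv_of_isOpen hV (by exact_mod_cast le_refl _)
  have hfdc : ContinuousOn (fderiv ℝ w) V := hfdC.continuousOn
  have hpC : ∀ i, ContDiffOn ℝ (⊤ : ℕ∞) (pf i) V := by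
    intro i
    exact hfdC.clm_apply contDiffOn_const
  have hpc : ∀ i, ContinuousOn (pf i) V := fun i => (hpC i).continuousOn
  have hqc : ∀ i, ContinuousOn (qf i) V := by
    intro i
    have h' : ContDiffOn ℝ (⊤ : ℕ∞) (fderiv ℝ (pf i)) V :=
      (hpC i).fderiv_of_isOpen hV (by exact_mod_cast le_refl _)
    exact h'.continuousOn.clm_apply continuousOn_const
  have hOm : MeasurableSet (Om d R) := measurableSet_ball
  have hball : Om d R ⊆ Metric.closedBall 0 R := Metric.ball_subset_closedBall
  have hIntOf : ∀ f : EuclideanSpace ℝ (Fin d) → ℝ, ContinuousOn f V → IntegrableOn f (Om d R) := by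
    intro f hf
    exact ((hf.mono hVc).integrableOn_compact (isCompact_closedBall 0 R)).mono_set hball
  -- per-direction identity
  have key : ∀ i : Fin d, ∫ x in Om d R, ((pf i x) ^ 2 + w x * qf i x) = 0 := by
    intro i
    set G : EuclideanSpace ℝ (Fin d) → ℝ := fun x => (pf i x) ^ 2 + w x * qf i x with hG
    have hGc : ContinuousOn G V := (((hpc i).pow 2).add (hwc.mul (hqc i)))
    apply slice_zero hR i (fun x => w x * pf i x) G
    · exact (integrable_indicator_iff hOm).mpr (hIntOf G hGc)
    · exact hGc.mono hVc
    · intro x hx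
      rw [hb x hx, zero_mul]
    · intro z hzi s hs
      set γ : ℝ → EuclideanSpace ℝ (Fin d) := fun s' => z + s' • EuclideanSpace.single i 1 with hγ
      have hγd : HasDerivAt γ (EuclideanSpace.single i 1) s := by
        have h1 : HasDerivAt (fun s' : ℝ => s' • EuclideanSpace.single i (1:ℝ))
            ((1:ℝ) • EuclideanSpace.single i (1:ℝ)) s := (hasDerivAt_id s).smul_const _
        rw [one_smul] at h1
        exact h1.const_add z
      have hγV : γ s ∈ V := hVc (by simpa [Metric.mem_closedBall, dist_zero_right] using hs)
      have hwx : ContDiffAt ℝ (⊤ : ℕ∞) w (γ s) := (hw (γ s) hγV).contDiffAt (hV.mem_nhds hγV)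
      have hwd : DifferentiableAt ℝ w (γ s) := hwx.differentiableAt (by simp)
      have h1 : HasDerivAt (fun s' => w (γ s')) (pf i (γ s)) s :=
        hwd.hasFDerivAt.comp_hasDerivAt s hγd
      have hpd : DifferentiableAt ℝ (pf i) (γ s) :=
        (((hpC i) (γ s) hγV).contDiffAt (hV.mem_nhds hγV)).differentiableAt (by simp)
      have h2 : HasDerivAt (fun s' => pf i (γ s')) (qf i (γ s)) s :=
        hpd.hasFDerivAt.comp_hasDerivAt s hγd
      have h3 := h1.mul h2
      have : pf i (γ s) * pf i (γ s) + w (γ s) * qf i (γ s) = G (γ s) := by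
        rw [hG]; ring
      rw [this] at h3
      exact h3
  -- sum over i
  have hsum : ∫ x in Om d R, (w x * lapl w x + ‖fderiv ℝ w x‖ ^ 2)
      = ∑ i : Fin d, ∫ x in Om d R, ((pf i x) ^ 2 + w x * qf i x) := by
    rw [← integral_finset_sum]
    · apply setIntegral_congr_fun hOm
      intro x hx
      have hnd : ‖fderiv ℝ w x‖ ^ 2 = ∑ i : Fin d, (pf i x) ^ 2 := norm_dual_sq _
      show w x * lapl w x + ‖fderiv ℝ w x‖ ^ 2 = ∑ i : Fin d, ((pf i x) ^ 2 + w x * qf i x)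
      unfold lapl
      rw [hnd, Finset.mul_sum, ← Finset.sum_add_distrib]
      exact Finset.sum_congr rfl fun i _ => by rw [add_comm]
    · intro i _
      exact hIntOf _ (((hpc i).pow 2).add (hwc.mul (hqc i)))
  have hzero : ∫ x in Om d R, (w x * lapl w x + ‖fderiv ℝ w x‖ ^ 2) = 0 := by
    rw [hsum]
    exact Finset.sum_eq_zero fun i _ => key i
  have hInt1 : IntegrableOn (fun x => w x * lapl w x) (Om d R) := by
    apply hIntOf
    apply hwc.mul
    apply continuousOn_finset_sum
    intro i _
    have h' : ContDiffOn ℝ (⊤ : ℕ∞) (fderiv ℝ (pf i)) V :=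
      (hpC i).fderiv_of_isOpen hV (by exact_mod_cast le_refl _)
    exact h'.continuousOn.clm_apply continuousOn_const
  have hInt2 : IntegrableOn (fun x => ‖fderiv ℝ w x‖ ^ 2) (Om d R) :=
    hIntOf _ ((hfdc.norm).pow 2)
  rw [integral_add hInt1 hInt2] at hzero
  linarith

section Setup

variable {d : ℕ} {R σ ω ε T : ℝ} {u : ℝ → EuclideanSpace ℝ (Fin d) → ℝ}
  {U : Set (ℝ × EuclideanSpace ℝ (Fin d))}

-- abbreviations
local notation "E" => EuclideanSpace ℝ (Fin d)

/-- joint function -/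
def Fj (u : ℝ → EuclideanSpace ℝ (Fin d) → ℝ) : ℝ × EuclideanSpace ℝ (Fin d) → ℝ :=
  fun p => u p.1 p.2

/-- time partial derivative -/
def Dt (u : ℝ → EuclideanSpace ℝ (Fin d) → ℝ) (r : ℝ) (x : EuclideanSpace ℝ (Fin d)) : ℝ :=
  fderiv ℝ (Fj u) (r, x) (1, 0)

theorem hasDerivAt_time (hU : IsOpen U) (hsm : ContDiffOn ℝ (⊤ : ℕ∞) (Fj u) U)
    {t : ℝ} {x : EuclideanSpace ℝ (Fin d)} (hp : (t, x) ∈ U) :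
    HasDerivAt (fun r => u r x) (Dt u t x) t := by
  have hFd : HasFDerivAt (Fj u) (fderiv ℝ (Fj u) (t, x)) (t, x) :=
    (((hsm _ hp).contDiffAt (hU.mem_nhds hp)).differentiableAt
      (by simp)).hasFDerivAt
  have hc : HasDerivAt (fun r : ℝ => (r, x)) ((1 : ℝ), (0 : EuclideanSpace ℝ (Fin d))) t :=
    (hasDerivAt_id t).prodMk (hasDerivAt_const t x)
  exact hFd.comp_hasDerivAt t hc

theorem fderiv_slice (hU : IsOpen U) (hsm : ContDiffOn ℝ (⊤ : ℕ∞) (Fj u) U)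
    {t : ℝ} {x : EuclideanSpace ℝ (Fin d)} (hp : (t, x) ∈ U) :
    fderiv ℝ (u t) x = (fderiv ℝ (Fj u) (t, x)).comp
      ((0 : EuclideanSpace ℝ (Fin d) →L[ℝ] ℝ).prod (ContinuousLinearMap.id ℝ _)) := by
  have hFd : HasFDerivAt (Fj u) (fderiv ℝ (Fj u) (t, x)) (t, x) :=
    (((hsm _ hp).contDiffAt (hU.mem_nhds hp)).differentiableAt
      (by simp)).hasFDerivAt
  have hι : HasFDerivAt (fun y : EuclideanSpace ℝ (Fin d) => (t, y))
      ((0 : EuclideanSpace ℝ (Fin d) →L[ℝ] ℝ).prod (ContinuousLinearMap.id ℝ _)) x :=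
    (hasFDerivAt_const t x).prodMk (hasFDerivAt_id x)
  have := (hFd.comp x hι).fderiv
  exact this

theorem fderiv_joint_cont (hU : IsOpen U) (hsm : ContDiffOn ℝ (⊤ : ℕ∞) (Fj u) U) :
    ContinuousOn (fun p : ℝ × EuclideanSpace ℝ (Fin d) => fderiv ℝ (u p.1) p.2) U := by
  have h1 : ContinuousOn (fderiv ℝ (Fj u)) U :=
    hsm.continuousOn_fderiv_of_isOpen hU (by exact_mod_cast le_top)
  have h2 : ContinuousOn (fun p : ℝ × EuclideanSpace ℝ (Fin d) =>
      (fderiv ℝ (Fj u) p).comp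
        ((0 : EuclideanSpace ℝ (Fin d) →L[ℝ] ℝ).prod (ContinuousLinearMap.id ℝ _))) U :=
    h1.clm_comp continuousOn_const
  intro p hp
  refine (h2 p hp).congr (fun q hq => ?_) ?_ <;>
    rw [fderiv_slice hU hsm (by rwa [Prod.mk.eta] : (_, _) ∈ U)]

theorem Dt_cont (hU : IsOpen U) (hsm : ContDiffOn ℝ (⊤ : ℕ∞) (Fj u) U) :
    ContinuousOn (fun p : ℝ × EuclideanSpace ℝ (Fin d) => Dt u p.1 p.2) U := by
  have h1 : ContinuousOn (fderiv ℝ (Fj u)) U :=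
    hsm.continuousOn_fderiv_of_isOpen hU (by exact_mod_cast le_top)
  have h2 := h1.clm_apply (continuousOn_const (c := ((1:ℝ), (0 : EuclideanSpace ℝ (Fin d)))))
  intro p hp
  refine (h2 p hp).congr (fun q hq => ?_) ?_ <;>
    · show Dt u _ _ = _
      rw [Dt, Prod.mk.eta]

end Setup

section Main

variable {d : ℕ} {R σ ω ε T : ℝ} {u : ℝ → EuclideanSpace ℝ (Fin d) → ℝ}
  {U : Set (ℝ × EuclideanSpace ℝ (Fin d))}

lemma closure_Om (hd : 1 ≤ d) (hR : 0 < R) :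
    closure (Om d R) = Metric.closedBall (0 : EuclideanSpace ℝ (Fin d)) R := by
  haveI : Nonempty (Fin d) := ⟨⟨0, hd⟩⟩
  exact closure_ball 0 hR.ne'

lemma tube (hd : 1 ≤ d) (hR : 0 < R) (hT : 0 ≤ T) (hU : IsOpen U)
    (hUsub : Set.Icc 0 T ×ˢ closure (Om d R) ⊆ U) :
    ∃ δ > 0, ∀ (r : ℝ) (x : EuclideanSpace ℝ (Fin d)),
      (∃ s ∈ Set.Icc 0 T, dist r s < δ) → x ∈ Metric.closedBall 0 R → (r, x) ∈ U := by
  have hK : IsCompact (Set.Icc (0:ℝ) T ×ˢ Metric.closedBall (0 : EuclideanSpace ℝ (Fin d)) R) :=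
    isCompact_Icc.prod (isCompact_closedBall 0 R)
  have hsub : Set.Icc (0:ℝ) T ×ˢ Metric.closedBall (0 : EuclideanSpace ℝ (Fin d)) R ⊆ U := by
    rw [← closure_Om hd hR]; exact hUsub
  obtain ⟨δ, hδ, hth⟩ := hK.exists_thickening_subset_open hU hsub
  refine ⟨δ, hδ, fun r x ⟨s, hs, hrs⟩ hx => hth ?_⟩
  rw [Metric.mem_thickening_iff]
  exact ⟨(s, x), ⟨hs, hx⟩, by
    rw [Prod.dist_eq, dist_self, sup_eq_left.mpr dist_nonneg]; exact hrs⟩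

lemma contDiffOn_slice (hsm : ContDiffOn ℝ (⊤ : ℕ∞) (Fj u) U) (s : ℝ) :
    ContDiffOn ℝ (⊤ : ℕ∞) (u s) {x | (s, x) ∈ U} := by
  have h := hsm.comp (f := fun x : EuclideanSpace ℝ (Fin d) => (s, x))
    ((contDiff_const.prodMk contDiff_id).contDiffOn) (fun x hx => hx)
  exact h

lemma integrableOnOm (hR : 0 < R) {f : EuclideanSpace ℝ (Fin d) → ℝ}
    (hf : ContinuousOn f (Metric.closedBall 0 R)) : IntegrableOn f (Om d R) := by
  exact (hf.integrableOn_compact (isCompact_closedBall 0 R)).mono_set Metric.ball_subset_closedBall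

set_option maxHeartbeats 1000000 in
theorem integral_param_continuousAt (hd : 1 ≤ d) (hR : 0 < R) (hT : 0 ≤ T)
    (hU : IsOpen U) (hUsub : Set.Icc 0 T ×ˢ closure (Om d R) ⊆ U)
    (G : ℝ × EuclideanSpace ℝ (Fin d) → ℝ) (hG : ContinuousOn G U)
    {s : ℝ} (hs : s ∈ Set.Icc 0 T) :
    ContinuousAt (fun t => ∫ x in Om d R, G (t, x)) s := by
  obtain ⟨δ, hδ, htube⟩ := tube hd hR hT hU hUsub
  have hOm : MeasurableSet (Om d R) := measurableSet_ball
  have hKsub : Om d R ⊆ Metric.closedBall 0 R := Metric.ball_subset_closedBall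
  haveI : IsFiniteMeasure ((volume : Measure (EuclideanSpace ℝ (Fin d))).restrict (Om d R)) :=
    ⟨by rw [Measure.restrict_apply_univ]; exact measure_ball_lt_top⟩
  have hball : ∀ r ∈ Metric.ball s (δ/2), ∀ x ∈ Metric.closedBall (0:EuclideanSpace ℝ (Fin d)) R,
      (r, x) ∈ U := by
    intro r hr x hx
    exact htube r x ⟨s, hs, lt_trans (Metric.mem_ball.mp hr) (by linarith)⟩ hx
  have hKcU : Set.Icc (s - δ/2) (s + δ/2) ×ˢ Metric.closedBall (0:EuclideanSpace ℝ (Fin d)) R ⊆ U := by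
    rintro ⟨r, x⟩ ⟨hr, hx⟩
    refine htube r x ⟨s, hs, ?_⟩ hx
    rw [Set.mem_Icc] at hr
    rw [Real.dist_eq, abs_lt]
    constructor <;> linarith
  obtain ⟨C, hC⟩ := ((isCompact_Icc.prod (isCompact_closedBall 0 R)).exists_bound_of_continuousOn
    (hG.mono hKcU))
  have hslice : ∀ r ∈ Metric.ball s (δ/2), ContinuousOn (fun x => G (r, x)) (Metric.closedBall 0 R) := by
    intro r hr
    exact hG.comp (Continuous.continuousOn (continuous_const.prodMk continuous_id))
      (fun x hx => hball r hr x hx)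
  apply continuousAt_of_dominated (bound := fun _ => C)
  · filter_upwards [Metric.ball_mem_nhds s (show (0:ℝ) < δ/2 by linarith)] with r hr
    exact (((hslice r hr).mono hKsub).aestronglyMeasurable hOm)
  · filter_upwards [Metric.ball_mem_nhds s (show (0:ℝ) < δ/2 by linarith)] with r hr
    rw [ae_restrict_iff' hOm]
    filter_upwards with x hx
    refine hC (r, x) ⟨?_, hKsub hx⟩
    have := Metric.mem_ball.mp hr
    rw [Real.dist_eq, abs_lt] at this
    exact ⟨by linarith, by linarith⟩
  · exact integrable_const C
  · rw [ae_restrict_iff' hOm]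
    filter_upwards with x hx
    have hCA : ContinuousAt G (s, x) :=
      (hG (s, x) (hball s (Metric.mem_ball_self (by linarith)) x (hKsub hx))).continuousAt
        (hU.mem_nhds (hball s (Metric.mem_ball_self (by linarith)) x (hKsub hx)))
    have h2 : ContinuousAt (fun t : ℝ => (t, x)) s :=
      (continuous_id.prodMk continuous_const).continuousAt
    exact ContinuousAt.comp (f := fun t : ℝ => (t, x)) hCA h2

end Main

section Main2

variable {d : ℕ} {R σ ω ε T : ℝ} {u : ℝ → EuclideanSpace ℝ (Fin d) → ℝ}
  {U : Set (ℝ × EuclideanSpace ℝ (Fin d))}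

lemma lapl_continuousOn {w : EuclideanSpace ℝ (Fin d) → ℝ}
    {V : Set (EuclideanSpace ℝ (Fin d))} (hV : IsOpen V)
    (hw : ContDiffOn ℝ (⊤ : ℕ∞) w V) : ContinuousOn (lapl w) V := by
  apply continuousOn_finset_sum
  intro i _
  have hfdC : ContDiffOn ℝ (⊤ : ℕ∞) (fderiv ℝ w) V :=
    hw.fderiv_of_isOpen hV (by exact_mod_cast le_refl _)
  have hpC : ContDiffOn ℝ (⊤ : ℕ∞) (fun x => fderiv ℝ w x (EuclideanSpace.single i 1)) V :=
    hfdC.clm_apply contDiffOn_const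
  have h' : ContDiffOn ℝ (⊤ : ℕ∞)
      (fderiv ℝ (fun x => fderiv ℝ w x (EuclideanSpace.single i 1))) V :=
    hpC.fderiv_of_isOpen hV (by exact_mod_cast le_refl _)
  exact h'.continuousOn.clm_apply continuousOn_const

lemma abs_rpow_mul (hσ : 0 < σ) (a : ℝ) : |a| ^ (2*σ) * a * a = |a| ^ (2*σ+2) := by
  have h1 : |a| ^ (2*σ+2) = |a| ^ (2*σ) * |a| ^ (2:ℝ) :=
    Real.rpow_add' (abs_nonneg a) (by linarith)
  have h2 : |a| ^ (2:ℝ) = a ^ 2 := by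
    rw [show (2:ℝ) = ((2:ℕ):ℝ) by norm_num, Real.rpow_natCast, sq_abs]
  rw [h1, h2]
  ring

set_option maxHeartbeats 1000000 in
theorem mass_hasDerivAt (hd : 1 ≤ d) (hR : 0 < R) (hσ : 0 < σ) (hε : 0 < ε) (hT : 0 ≤ T)
    (hU : IsOpen U) (hUsub : Set.Icc 0 T ×ˢ closure (Om d R) ⊆ U)
    (hsm : ContDiffOn ℝ (⊤ : ℕ∞) (Fj u) U)
    (hbd : ∀ t ∈ Set.Icc 0 T, ∀ x : EuclideanSpace ℝ (Fin d), ‖x‖ = R → u t x = 0)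
    (hflow : ∀ t ∈ Set.Icc 0 T, ∀ x ∈ Om d R,
      deriv (fun s => u s x) t =
        lapl (u t) x - ω * u t x + muEps (Om d R) σ ω ε (u t) * |u t x| ^ (2 * σ) * u t x)
    {s : ℝ} (hs : s ∈ Set.Icc 0 T) :
    HasDerivAt (fun t => ∫ x in Om d R, (u t x) ^ 2)
      (-(2*ε) * muEps (Om d R) σ ω ε (u s)) s := by
  obtain ⟨δ, hδ, htube⟩ := tube hd hR hT hU hUsub
  have hOm : MeasurableSet (Om d R) := measurableSet_ball
  have hKsub : Om d R ⊆ Metric.closedBall 0 R := Metric.ball_subset_closedBall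
  haveI : IsFiniteMeasure ((volume : Measure (EuclideanSpace ℝ (Fin d))).restrict (Om d R)) :=
    ⟨by rw [Measure.restrict_apply_univ]; exact measure_ball_lt_top⟩
  have hball : ∀ r ∈ Metric.ball s (δ/2), ∀ x ∈ Metric.closedBall (0:EuclideanSpace ℝ (Fin d)) R,
      (r, x) ∈ U := fun r hr x hx =>
    htube r x ⟨s, hs, lt_trans (Metric.mem_ball.mp hr) (by linarith)⟩ hx
  have hKcU : Set.Icc (s - δ/2) (s + δ/2) ×ˢ Metric.closedBall (0:EuclideanSpace ℝ (Fin d)) R ⊆ U := by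
    rintro ⟨r, x⟩ ⟨hr, hx⟩
    refine htube r x ⟨s, hs, ?_⟩ hx
    rw [Set.mem_Icc] at hr
    rw [Real.dist_eq, abs_lt]
    constructor <;> linarith
  have hF'cont : ContinuousOn (fun p : ℝ × EuclideanSpace ℝ (Fin d) =>
      2 * u p.1 p.2 * Dt u p.1 p.2) U :=
    (continuousOn_const.mul hsm.continuousOn).mul (Dt_cont hU hsm)
  obtain ⟨C, hC⟩ := ((isCompact_Icc.prod (isCompact_closedBall 0 R)).exists_bound_of_continuousOn
    (hF'cont.mono hKcU))
  have hslice : ∀ r ∈ Metric.ball s (δ/2),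
      ContinuousOn (fun x => u r x) (Metric.closedBall 0 R) := by
    intro r hr
    exact hsm.continuousOn.comp (Continuous.continuousOn (continuous_const.prodMk continuous_id))
      (fun x hx => hball r hr x hx)
  have hF'slice : ContinuousOn (fun x => 2 * u s x * Dt u s x) (Metric.closedBall 0 R) :=
    hF'cont.comp (Continuous.continuousOn (continuous_const.prodMk continuous_id))
      (fun x hx => hball s (Metric.mem_ball_self (by linarith)) x hx)
  have h1 : ∀ᶠ r in nhds s, AEStronglyMeasurable (fun x => (u r x) ^ 2)
      ((volume : Measure (EuclideanSpace ℝ (Fin d))).restrict (Om d R)) := by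
    filter_upwards [Metric.ball_mem_nhds s (show (0:ℝ) < δ/2 by linarith)] with r hr
    exact (((hslice r hr).pow 2).mono hKsub).aestronglyMeasurable hOm
  have h2 : Integrable (fun x => (u s x) ^ 2)
      ((volume : Measure (EuclideanSpace ℝ (Fin d))).restrict (Om d R)) :=
    (((hslice s (Metric.mem_ball_self (by linarith))).pow 2).integrableOn_compact
      (isCompact_closedBall 0 R)).mono_set hKsub
  have h3 : AEStronglyMeasurable (fun x => 2 * u s x * Dt u s x)
      ((volume : Measure (EuclideanSpace ℝ (Fin d))).restrict (Om d R)) :=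
    (hF'slice.mono hKsub).aestronglyMeasurable hOm
  have h4 : ∀ᵐ x ∂((volume : Measure (EuclideanSpace ℝ (Fin d))).restrict (Om d R)),
      ∀ r ∈ Metric.ball s (δ/2), ‖2 * u r x * Dt u r x‖ ≤ C := by
    rw [ae_restrict_iff' hOm]
    filter_upwards with x hx r hr
    refine hC (r, x) ⟨?_, hKsub hx⟩
    have := Metric.mem_ball.mp hr
    rw [Real.dist_eq, abs_lt] at this
    exact ⟨by linarith, by linarith⟩
  have h5 : Integrable (fun _ : EuclideanSpace ℝ (Fin d) => C)
      ((volume : Measure (EuclideanSpace ℝ (Fin d))).restrict (Om d R)) := integrable_const C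
  have h6 : ∀ᵐ x ∂((volume : Measure (EuclideanSpace ℝ (Fin d))).restrict (Om d R)),
      ∀ r ∈ Metric.ball s (δ/2), HasDerivAt (fun r => (u r x) ^ 2) (2 * u r x * Dt u r x) r := by
    rw [ae_restrict_iff' hOm]
    filter_upwards with x hx r hr
    have hd1 : HasDerivAt (fun r => u r x) (Dt u r x) r :=
      hasDerivAt_time hU hsm (hball r hr x (hKsub hx))
    have := hd1.fun_pow 2
    simpa using this
  have main := hasDerivAt_integral_of_dominated_loc_of_deriv_le
      (F := fun t x => (u t x) ^ 2) (F' := fun t x => 2 * u t x * Dt u t x)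
      (Metric.ball_mem_nhds s (show (0:ℝ) < δ/2 by linarith)) h1 h2 h3 h4 h5 h6
  -- now rewrite the derivative value
  have hDer := main.2
  have hval : ∫ x in Om d R, 2 * u s x * Dt u s x = -(2*ε) * muEps (Om d R) σ ω ε (u s) := by
    set Vs : Set (EuclideanSpace ℝ (Fin d)) := {x | (s, x) ∈ U} with hVs
    have hVso : IsOpen Vs := hU.preimage (continuous_const.prodMk continuous_id)
    have hVsK : Metric.closedBall 0 R ⊆ Vs := fun x hx =>
      hball s (Metric.mem_ball_self (by linarith)) x hx
    have hwC : ContDiffOn ℝ (⊤ : ℕ∞) (u s) Vs := contDiffOn_slice hsm s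
    -- integrability of pieces
    have hwcont : ContinuousOn (u s) (Metric.closedBall 0 R) :=
      hslice s (Metric.mem_ball_self (by linarith))
    have hlap : ContinuousOn (fun x => u s x * lapl (u s) x) (Metric.closedBall 0 R) :=
      (hwC.continuousOn.mul (lapl_continuousOn hVso hwC)).mono hVsK
    have hrpowc : Continuous (fun a : ℝ => |a| ^ (2*σ+2)) := by
      have hq : Continuous fun b : ℝ => b ^ (2*σ+2) :=
        continuous_iff_continuousAt.mpr fun b =>
          Real.continuousAt_rpow_const b _ (Or.inr (by linarith))
      exact hq.comp continuous_abs
    have hpow : ContinuousOn (fun x => |u s x| ^ (2*σ+2)) (Metric.closedBall 0 R) :=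
      hrpowc.comp_continuousOn hwcont
    set A := ∫ x in Om d R, ‖fderiv ℝ (u s) x‖ ^ 2 with hA
    set B := ∫ x in Om d R, (u s x) ^ 2 with hB
    set Cc := ∫ x in Om d R, |u s x| ^ (2*σ+2) with hCc
    set M := muEps (Om d R) σ ω ε (u s) with hM
    have hMdef : M = (A + ω * B) / (Cc + ε) := rfl
    have hCcnn : 0 ≤ Cc := by
      rw [hCc]
      apply setIntegral_nonneg hOm
      intro x _
      exact Real.rpow_nonneg (abs_nonneg _) _
    have hden : Cc + ε ≠ 0 := by positivity
    have hABM : A + ω * B = M * (Cc + ε) := by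
      rw [hMdef, div_mul_cancel₀ _ hden]
    -- pointwise identity on Om
    have hpt : ∀ x ∈ Om d R, 2 * u s x * Dt u s x
        = 2 * (u s x * lapl (u s) x) + ((-(2*ω)) * (u s x) ^ 2 + (2*M) * |u s x| ^ (2*σ+2)) := by
      intro x hx
      have hDt : Dt u s x = deriv (fun r => u r x) s :=
        (hasDerivAt_time hU hsm (hball s (Metric.mem_ball_self (by linarith)) x (hKsub hx))).deriv.symm
      rw [hDt, hflow s hs x hx]
      have habs := abs_rpow_mul hσ (u s x)
      rw [← hM]
      linear_combination (2*M) * habs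
    rw [setIntegral_congr_fun hOm hpt]
    have hI1 : IntegrableOn (fun x => 2 * (u s x * lapl (u s) x)) (Om d R) :=
      (integrableOnOm hR hlap).const_mul 2
    have hI2 : IntegrableOn (fun x => (-(2*ω)) * (u s x) ^ 2) (Om d R) :=
      (integrableOnOm hR (hwcont.pow 2)).const_mul _
    have hI3 : IntegrableOn (fun x => (2*M) * |u s x| ^ (2*σ+2)) (Om d R) :=
      (integrableOnOm hR hpow).const_mul _
    have hI23 : IntegrableOn (fun x => (-(2*ω)) * (u s x) ^ 2
        + (2*M) * |u s x| ^ (2*σ+2)) (Om d R) := hI2.add hI3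
    rw [integral_add hI1 hI23, integral_add hI2 hI3,
      MeasureTheory.integral_const_mul, MeasureTheory.integral_const_mul, MeasureTheory.integral_const_mul]
    have hibp : ∫ x in Om d R, u s x * lapl (u s) x = - A :=
      ibp hR (u s) Vs hVso hVsK hwC (fun x hx => hbd s hs x hx)
    rw [hibp, ← hB, ← hCc]
    linear_combination (-2 : ℝ) * hABM
  rw [hval] at hDer
  exact hDer

end Main2


/-- mass identity for the ε-regularized flow. -/
theorem mass_identity_regularized {d : ℕ} (hd : 1 ≤ d) (R : ℝ) (hR : 0 < R)
    (σ ω ε T : ℝ) (hσ : 0 < σ) (hσd : 3 ≤ d → σ < 2 / ((d : ℝ) - 2))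
    (hε : 0 < ε) (hT : 0 ≤ T)
    (u : ℝ → EuclideanSpace ℝ (Fin d) → ℝ)
    (hu : IsEpsSolution d R σ ω ε T u) :
    ∀ t ∈ Set.Icc (0 : ℝ) T,
      ∫ x in Om d R, (u t x) ^ 2 =
        (∫ x in Om d R, (u 0 x) ^ 2) - 2 * ε * ∫ s in (0 : ℝ)..t, muEps (Om d R) σ ω ε (u s) := by
  obtain ⟨U, hU, hUsub, hsm⟩ := hu.smooth
  have hsm' : ContDiffOn ℝ (⊤ : ℕ∞) (Fj u) U := hsm
  intro t ht
  have huIcc : Set.uIcc (0:ℝ) t ⊆ Set.Icc 0 T := by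
    rw [Set.uIcc_of_le ht.1]
    exact fun r hr => ⟨hr.1, le_trans hr.2 ht.2⟩
  have hderiv : ∀ s ∈ Set.uIcc (0:ℝ) t,
      HasDerivAt (fun r => ∫ x in Om d R, (u r x) ^ 2)
        (-(2*ε) * muEps (Om d R) σ ω ε (u s)) s := fun s hsmem =>
    mass_hasDerivAt hd hR hσ hε hT hU hUsub hsm' hu.boundary hu.flow (huIcc hsmem)
  have hcont : ContinuousOn (fun s => muEps (Om d R) σ ω ε (u s)) (Set.uIcc 0 t) := by
    intro s hsmem
    have hsT := huIcc hsmem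
    -- muEps as quotient of parametric integrals
    have hAcont : ContinuousAt (fun r => ∫ x in Om d R, ‖fderiv ℝ (u r) x‖ ^ 2) s := by
      have hGc : ContinuousOn
          (fun p : ℝ × EuclideanSpace ℝ (Fin d) => ‖fderiv ℝ (u p.1) p.2‖ ^ 2) U :=
        (fderiv_joint_cont hU hsm').norm.pow 2
      exact integral_param_continuousAt hd hR hT hU hUsub _ hGc hsT
    have hBcont : ContinuousAt (fun r => ∫ x in Om d R, (u r x) ^ 2) s := by
      have hGc : ContinuousOn
          (fun p : ℝ × EuclideanSpace ℝ (Fin d) => (u p.1 p.2) ^ 2) U :=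
        hsm'.continuousOn.pow 2
      exact integral_param_continuousAt hd hR hT hU hUsub _ hGc hsT
    have hCcont : ContinuousAt (fun r => ∫ x in Om d R, |u r x| ^ (2*σ+2)) s := by
      have hq : Continuous fun b : ℝ => b ^ (2*σ+2) :=
        continuous_iff_continuousAt.mpr fun b =>
          Real.continuousAt_rpow_const b _ (Or.inr (by linarith))
      have hGc : ContinuousOn
          (fun p : ℝ × EuclideanSpace ℝ (Fin d) => |u p.1 p.2| ^ (2*σ+2)) U :=
        (hq.comp continuous_abs).comp_continuousOn hsm'.continuousOn
      exact integral_param_continuousAt hd hR hT hU hUsub _ hGc hsT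
    have hden : (∫ x in Om d R, |u s x| ^ (2*σ+2)) + ε ≠ 0 := by
      have h0 : 0 ≤ ∫ x in Om d R, |u s x| ^ (2*σ+2) :=
        setIntegral_nonneg measurableSet_ball (fun x _ => Real.rpow_nonneg (abs_nonneg _) _)
      positivity
    have : ContinuousAt (fun r => ((∫ x in Om d R, ‖fderiv ℝ (u r) x‖ ^ 2)
        + ω * ∫ x in Om d R, (u r x) ^ 2)
        / ((∫ x in Om d R, |u r x| ^ (2*σ+2)) + ε)) s :=
      (hAcont.add (continuousAt_const.mul hBcont)).div (hCcont.add continuousAt_const) hden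
    exact this.continuousWithinAt
  have hii : IntervalIntegrable (fun s => -(2*ε) * muEps (Om d R) σ ω ε (u s)) volume 0 t :=
    (continuousOn_const.mul hcont).intervalIntegrable
  have hftc := intervalIntegral.integral_eq_sub_of_hasDerivAt hderiv hii
  rw [intervalIntegral.integral_const_mul] at hftc
  linarith [hftc]
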